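/- Let W = (w_0, w_1, …, w_ℓ) with w_ℓ = w_0 and ℓ ≥ 3 be a closed walk in the underlying graph of a voltage digraph over ZMod m that is non-reversing, i.e. no step is immediately followed by the same edge traversed in the reverse direction (including cyclically at the starting point). Suppose the net voltage of W equals 0 in ZMod m, and that for all indices 0 ≤ i < j ≤ ℓ with (i, j) ≠ (0, ℓ) and w_i = w_j, the net voltage of the segment (w_i, …, w_j) is nonzero in ZMod m. Then the lift of W — the closed walk in the lift graph starting at (w_0, 0) whose r-th vertex is (w_r, s_r), where s_r is the net voltage of the first r steps of W — is a cycle of length ℓ in the lift graph. -/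

import Mathlib

/-- A voltage digraph over `ZMod m`: an irreflexive arc set `A ⊆ V × V` together with a
voltage function assigning to each arc an element of `ZMod m`. -/
structure VoltageDigraph (V : Type) (m : ℕ) where
  A : Set (V × V)
  irrefl : ∀ v : V, (v, v) ∉ A
  vol : V × V → ZMod m

namespace VoltageDigraph

variable {V : Type} {m : ℕ}

/-- The underlying simple graph of a voltage digraph: `v` is adjacent to `w` iff
`(v,w) ∈ A` or `(w,v) ∈ A`. -/
def underlying (D : VoltageDigraph V m) : SimpleGraph V where
  Adj v w := (v, w) ∈ D.A ∨ (w, v) ∈ D.A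
  symm := ⟨fun v w h => h.symm⟩
  loopless := ⟨fun v h => h.elim (D.irrefl v) (D.irrefl v)⟩

/-- The lift of a voltage digraph: the simple graph on `V × ZMod m` in which `(v,i)` and
`(w,j)` are adjacent iff `(v,w) ∈ A` and `j = i + vol (v,w)`, or `(w,v) ∈ A` and
`i = j + vol (w,v)`. -/
def lift (D : VoltageDigraph V m) : SimpleGraph (V × ZMod m) where
  Adj p q := ((p.1, q.1) ∈ D.A ∧ q.2 = p.2 + D.vol (p.1, q.1)) ∨
    ((q.1, p.1) ∈ D.A ∧ p.2 = q.2 + D.vol (q.1, p.1))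
  symm := ⟨fun p q h => h.symm⟩
  loopless := ⟨fun p h => h.elim (fun h' => D.irrefl p.1 h'.1) (fun h' => D.irrefl p.1 h'.1)⟩

/-- The signed voltage of a single step `v → w` of a walk in the underlying graph:
`vol (v,w)` if the step traverses the arc `(v,w)` from tail to head, and `- vol (w,v)`
otherwise (i.e. if it traverses the arc `(w,v)` from head to tail). -/
noncomputable def netStep (D : VoltageDigraph V m) (v w : V) : ZMod m := by
  classical exact if (v, w) ∈ D.A then D.vol (v, w) else - D.vol (w, v)

/-- The net voltage of a walk in the underlying graph: the sum of the signed voltages of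
its steps. -/
noncomputable def netVoltage (D : VoltageDigraph V m) {u v : V}
    (w : D.underlying.Walk u v) : ZMod m :=
  (w.darts.map (fun d => D.netStep d.fst d.snd)).sum

/-- The lift with pinned vertices: the lift graph augmented by one extra vertex for each
pinned vertex `p` (attached to `attach p ∈ V`), adjacent to `(attach p, i)` for every
`i : ZMod m`. -/
def pinnedLift (D : VoltageDigraph V m) {P : Type} (attach : P → V) :
    SimpleGraph ((V × ZMod m) ⊕ P) :=
  SimpleGraph.fromRel (fun a b =>
    (∃ u v : V × ZMod m, a = Sum.inl u ∧ b = Sum.inl v ∧ D.lift.Adj u v) ∨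
    (∃ (p : P) (u : V × ZMod m), a = Sum.inr p ∧ b = Sum.inl u ∧ attach p = u.1))

end VoltageDigraph

section BuildWalk

open SimpleGraph

variable {α : Type} {G : SimpleGraph α}

def buildWalk (G : SimpleGraph α) (f : ℕ → α) :
    (n : ℕ) → (∀ i < n, G.Adj (f i) (f (i+1))) → G.Walk (f 0) (f n)
  | 0, _ => .nil
  | n+1, h => (buildWalk G f n fun i hi => h i (hi.trans n.lt_succ_self)).concat
      (h n n.lt_succ_self)

lemma buildWalk_length (f : ℕ → α) :
    ∀ (n : ℕ) (h : ∀ i < n, G.Adj (f i) (f (i+1))), (buildWalk G f n h).length = n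
  | 0, _ => rfl
  | n+1, h => by
    simp only [buildWalk, Walk.length_concat, buildWalk_length f n]

lemma buildWalk_getVert (f : ℕ → α) :
    ∀ (n : ℕ) (h : ∀ i < n, G.Adj (f i) (f (i+1))) (r : ℕ), r ≤ n →
      (buildWalk G f n h).getVert r = f r
  | 0, _, r, hr => by
    interval_cases r; simp [buildWalk]
  | n+1, h, r, hr => by
    rw [buildWalk, Walk.concat_eq_append, Walk.getVert_append, buildWalk_length]
    rcases lt_or_ge r (n+1) with h1 | h1
    · rcases Nat.lt_or_ge r n with h2 | h2
      · rw [if_pos h2, buildWalk_getVert f n _ r h2.le]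
      · rw [if_neg (by omega)]
        have h3 : r - n = 0 := by omega
        rw [h3, Walk.getVert_zero, show r = n from by omega]
    · rw [if_neg (by omega)]
      have h3 : r - n = 1 := by omega
      rw [h3, show r = n + 1 from by omega]
      rfl

lemma buildWalk_support (f : ℕ → α) :
    ∀ (n : ℕ) (h : ∀ i < n, G.Adj (f i) (f (i+1))),
      (buildWalk G f n h).support = (List.range (n+1)).map f
  | 0, _ => rfl
  | n+1, h => by
    rw [buildWalk, Walk.support_concat, buildWalk_support f n, List.range_succ (n := n+1)]
    simp

lemma buildWalk_edges (f : ℕ → α) :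
    ∀ (n : ℕ) (h : ∀ i < n, G.Adj (f i) (f (i+1))),
      (buildWalk G f n h).edges = (List.range n).map (fun i => s(f i, f (i+1)))
  | 0, _ => rfl
  | n+1, h => by
    rw [buildWalk, Walk.edges_concat, buildWalk_edges f n, List.range_succ]
    simp

end BuildWalk

lemma netStep_of_mem {V : Type} {m : ℕ} (D : VoltageDigraph V m) {v w : V}
    (h : (v, w) ∈ D.A) : D.netStep v w = D.vol (v, w) := by
  simp [VoltageDigraph.netStep, h]

lemma netStep_of_not_mem {V : Type} {m : ℕ} (D : VoltageDigraph V m) {v w : V}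
    (h : (v, w) ∉ D.A) : D.netStep v w = - D.vol (w, v) := by
  simp [VoltageDigraph.netStep, h]

/-- a non-reversing closed walk in a voltage digraph whose net voltage is `0`
and none of whose proper sub-walks between repeated vertices has net voltage `0` lifts to
a cycle of length `ℓ` in the lift graph. -/
theorem statement6 {V : Type} [Fintype V] {m : ℕ} (hm : 1 ≤ m)
    (D : VoltageDigraph V m) (ℓ : ℕ) (hℓ : 3 ≤ ℓ) (w : ℕ → V)
    (hclosed : w ℓ = w 0)
    (hadj : ∀ i < ℓ, D.underlying.Adj (w i) (w (i + 1)))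
    (hnonrev : ∀ i, i + 2 ≤ ℓ → w (i + 2) ≠ w i)
    (hnonrevcyc : w 1 ≠ w (ℓ - 1))
    (hnet : (∑ i ∈ Finset.range ℓ, D.netStep (w i) (w (i + 1))) = 0)
    (hseg : ∀ i j : ℕ, i < j → j ≤ ℓ → (i, j) ≠ (0, ℓ) → w i = w j →
      (∑ r ∈ Finset.Ico i j, D.netStep (w r) (w (r + 1))) ≠ 0) :
    ∃ c : D.lift.Walk (w 0, 0) (w 0, 0),
      c.IsCycle ∧ c.length = ℓ ∧
      ∀ r ≤ ℓ, c.getVert r = (w r, ∑ i ∈ Finset.range r, D.netStep (w i) (w (i + 1))) := by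
  classical
  set f : ℕ → V × ZMod m := fun r => (w r, ∑ i ∈ Finset.range r, D.netStep (w i) (w (i + 1)))
    with hf
  have hadjL : ∀ i < ℓ, D.lift.Adj (f i) (f (i + 1)) := by
    intro i hi
    have hstep : (∑ r ∈ Finset.range (i + 1), D.netStep (w r) (w (r + 1)))
        = (∑ r ∈ Finset.range i, D.netStep (w r) (w (r + 1))) + D.netStep (w i) (w (i + 1)) :=
      Finset.sum_range_succ _ _
    by_cases hA : (w i, w (i + 1)) ∈ D.A
    · left
      refine ⟨hA, ?_⟩
      simp only [hf]
      rw [hstep, netStep_of_mem D hA]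
    · have hA' : (w (i + 1), w i) ∈ D.A := by
        rcases hadj i hi with h | h
        · exact absurd h hA
        · exact h
      right
      refine ⟨hA', ?_⟩
      simp only [hf]
      rw [hstep, netStep_of_not_mem D hA]
      ring
  have hinj : ∀ i j : ℕ, i < j → j ≤ ℓ → ¬(i = 0 ∧ j = ℓ) → f i ≠ f j := by
    intro i j hij hj h0 hfeq
    have hwij : w i = w j := congrArg Prod.fst hfeq
    have hsij : (∑ r ∈ Finset.range i, D.netStep (w r) (w (r + 1)))
        = ∑ r ∈ Finset.range j, D.netStep (w r) (w (r + 1)) := congrArg Prod.snd hfeq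
    refine hseg i j hij hj ?_ hwij ?_
    · intro h
      exact h0 ⟨congrArg Prod.fst h, congrArg Prod.snd h⟩
    · rw [Finset.sum_Ico_eq_sub _ hij.le, ← hsij, sub_self]
  have hedge : ∀ i j : ℕ, i < j → j < ℓ → s(f i, f (i + 1)) ≠ s(f j, f (j + 1)) := by
    intro i j hij hj hEq
    rw [Sym2.eq_iff] at hEq
    rcases hEq with ⟨h1, h2⟩ | ⟨h1, h2⟩
    · exact hinj (i + 1) (j + 1) (by omega) (by omega) (by omega) h2
    · by_cases hij1 : i + 1 = j
      · subst hij1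
        have hw' : w i = w (i + 1 + 1) := congrArg Prod.fst h1
        exact hnonrev i (by omega) hw'.symm
      · exact hinj (i + 1) j (by omega) (by omega) (by omega) h2
  have hf0 : f 0 = (w 0, (0 : ZMod m)) := by simp [hf]
  have hfl : f ℓ = (w 0, (0 : ZMod m)) := by
    simp only [hf]
    rw [hclosed, hnet]
  have hlen : ((buildWalk D.lift f ℓ hadjL).copy hf0 hfl).length = ℓ := by
    rw [SimpleGraph.Walk.length_copy, buildWalk_length]
  refine ⟨(buildWalk D.lift f ℓ hadjL).copy hf0 hfl, ?_, hlen, ?_⟩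
  · constructor
    · constructor
      · constructor
        rw [SimpleGraph.Walk.edges_copy, buildWalk_edges]
        refine List.Nodup.map_on ?_ List.nodup_range
        intro i hi j hj hEq
        simp only [List.mem_range] at hi hj
        by_contra hne
        rcases Nat.lt_or_ge i j with h | h
        · exact hedge i j h hj hEq
        · exact hedge j i (by omega) hi hEq.symm
      · intro h
        rw [h] at hlen
        simp only [SimpleGraph.Walk.length_nil] at hlen
        omega
    · rw [SimpleGraph.Walk.support_copy, buildWalk_support, List.range_succ_eq_map,
        List.map_cons, List.tail_cons, List.map_map]
      refine List.Nodup.map_on ?_ List.nodup_range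
      intro i hi j hj hEq
      simp only [List.mem_range] at hi hj
      simp only [Function.comp_apply] at hEq
      by_contra hne
      rcases Nat.lt_or_ge i j with h | h
      · exact hinj (i + 1) (j + 1) (by omega) (by omega) (by omega) hEq
      · exact hinj (j + 1) (i + 1) (by omega) (by omega) (by omega) hEq.symm
  · intro r hr
    rw [SimpleGraph.Walk.getVert_copy, buildWalk_getVert f ℓ hadjL r hr]
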